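/- arXiv:2512.00389 — 2 statements merged into one kernel-verified Lean document; each statement's English description precedes it below -/
import Mathlib

section
/- Let F : ℝ^k → ℝ be differentiable, bounded below with F* := inf F, satisfying the PŁ condition ‖∇F(z)‖² ≥ 2μ (F(z) − F*) for all z ∈ ℝ^k, with μ > 0. Let h : ℝ^d → ℝ^k be differentiable and suppose there is m > 0 such that ‖J_h(θ)ᵀ v‖ ≥ m‖v‖ for all θ ∈ ℝ^d and v ∈ ℝ^k. Then the composition F ∘ h satisfies the PŁ condition with constant μ·m²: for all θ, ‖∇(F∘h)(θ)‖² ≥ 2μm² (F(h(θ)) − inf_θ' F(h(θ'))). -/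
lemma grad_inner {n : ℕ} (f : EuclideanSpace ℝ (Fin n) → ℝ) (x u : EuclideanSpace ℝ (Fin n)) :
    inner ℝ (gradient f x) u = fderiv ℝ f x u := by
  rw [gradient, InnerProductSpace.toDual_symm_apply]

/-- If `F : ℝ^k → ℝ` is differentiable, bounded below, and satisfies
the PŁ condition `‖∇F(z)‖² ≥ 2μ(F(z) − inf F)`, and `h : ℝ^d → ℝ^k` is differentiable
with `‖J_h(θ)ᵀ v‖ ≥ m‖v‖` for all `θ, v` (smallest singular value at least `m > 0`),
then `F ∘ h` satisfies the PŁ condition with constant `μ·m²`. -/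
theorem stmt_13 {k d : ℕ} (F : EuclideanSpace ℝ (Fin k) → ℝ)
    (hF : Differentiable ℝ F) (hbdd : BddBelow (Set.range F))
    (μ : ℝ) (hμ : 0 < μ)
    (hPL : ∀ z, 2 * μ * (F z - ⨅ z', F z') ≤ ‖gradient F z‖ ^ 2)
    (h : EuclideanSpace ℝ (Fin d) → EuclideanSpace ℝ (Fin k))
    (hh : Differentiable ℝ h)
    (m : ℝ) (hm : 0 < m)
    (hsing : ∀ (θ : EuclideanSpace ℝ (Fin d)) (v : EuclideanSpace ℝ (Fin k)),
      m * ‖v‖ ≤ ‖(fderiv ℝ h θ).adjoint v‖) :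
    ∀ θ, 2 * (μ * m ^ 2) * (F (h θ) - ⨅ θ', F (h θ')) ≤ ‖gradient (F ∘ h) θ‖ ^ 2 := by
  intro θ
  have hcomp : fderiv ℝ (F ∘ h) θ = (fderiv ℝ F (h θ)).comp (fderiv ℝ h θ) :=
    fderiv_comp θ (hF _) (hh θ)
  have key : gradient (F ∘ h) θ = (fderiv ℝ h θ).adjoint (gradient F (h θ)) := by
    apply ext_inner_right ℝ
    intro u
    rw [grad_inner, hcomp, ContinuousLinearMap.adjoint_inner_left, grad_inner]
    rfl
  have h1 : (⨅ z', F z') ≤ ⨅ θ', F (h θ') :=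
    le_ciInf fun θ' => ciInf_le hbdd _
  have h2 := hPL (h θ)
  have h3 := hsing θ (gradient F (h θ))
  have hn : (0:ℝ) ≤ ‖gradient F (h θ)‖ := norm_nonneg _
  have hbdd2 : BddBelow (Set.range fun θ' => F (h θ')) := by
    obtain ⟨c, hc⟩ := hbdd
    exact ⟨c, by rintro x ⟨θ', rfl⟩; exact hc ⟨h θ', rfl⟩⟩
  have h0 : (⨅ θ', F (h θ')) ≤ F (h θ) := ciInf_le hbdd2 θ
  have h4 : m ^ 2 * ‖gradient F (h θ)‖ ^ 2 ≤
      ‖(fderiv ℝ h θ).adjoint (gradient F (h θ))‖ ^ 2 := by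
    have := mul_le_mul h3 h3 (by positivity) (norm_nonneg _)
    nlinarith
  rw [key]
  calc 2 * (μ * m ^ 2) * (F (h θ) - ⨅ θ', F (h θ'))
      ≤ m ^ 2 * (2 * μ * (F (h θ) - ⨅ z', F z')) := by nlinarith [mul_le_mul_of_nonneg_left h1 (show (0:ℝ) ≤ 2 * μ * m ^ 2 by positivity)]
    _ ≤ m ^ 2 * ‖gradient F (h θ)‖ ^ 2 := by nlinarith
    _ ≤ _ := h4
end

section
/- Let g : ℝ^m → ℝ be continuously differentiable, bounded below with g* := inf g attained on a nonempty closed set X* := argmin g, and suppose g satisfies the PŁ condition ‖∇g(x)‖² ≥ 2μ (g(x) − g*) for all x, with μ > 0. Then g satisfies quadratic growth: g(x) − g* ≥ (μ/2) · dist(x, X*)² for all x ∈ ℝ^m, i.e., dist(x, X*) ≤ √(2/μ) · √(g(x) − g*). -/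
open Metric Filter Topology InnerProductSpace Set

/-- If `f` is differentiable at `y` and locally `f z ≥ f y - K‖z - y‖`, then `‖∇f y‖ ≤ K`. -/
lemma aux_grad_bound {E : Type*} [NormedAddCommGroup E] [InnerProductSpace ℝ E]
    [CompleteSpace E] (f : E → ℝ) (y : E) (K : ℝ) (hK : 0 ≤ K)
    (hf : DifferentiableAt ℝ f y)
    (hb : ∀ᶠ z in 𝓝 y, f y - K * ‖z - y‖ ≤ f z) : ‖gradient f y‖ ≤ K := by
  by_contra hlt
  push_neg at hlt
  set u := gradient f y with hu
  have hu0 : u ≠ 0 := by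
    intro h
    rw [h, norm_zero] at hlt; exact absurd hK (not_le.2 hlt)
  set v : E := -(‖u‖⁻¹ • u) with hv
  have hvnorm : ‖v‖ = 1 := by
    rw [hv, norm_neg, norm_smul, norm_inv, norm_norm,
      inv_mul_cancel₀ (norm_ne_zero_iff.2 hu0)]
  -- φ t = f (y + t • v) has derivative ⟪u, v⟫ = -‖u‖ at 0
  have hline : HasDerivAt (fun t : ℝ => y + t • v) v 0 := by
    simpa using ((hasDerivAt_id (0:ℝ)).smul_const v).const_add y
  have hfd : HasFDerivAt f (toDual ℝ E u) y := hf.hasGradientAt.hasFDerivAt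
  have hφ : HasDerivAt (fun t : ℝ => f (y + t • v)) (toDual ℝ E u v) 0 := by
    have hfd' : HasFDerivAt f (toDual ℝ E u) (y + (0:ℝ) • v) := by simpa using hfd
    have h2 := hfd'.comp_hasDerivAt (0 : ℝ) hline
    have heq : (f ∘ fun t : ℝ => y + t • v) = fun t : ℝ => f (y + t • v) := rfl
    simpa [heq] using h2
  have hval : (toDual ℝ E u) v = -‖u‖ := by
    rw [toDual_apply_apply, hv, inner_neg_right, real_inner_smul_right, real_inner_self_eq_norm_sq]
    have : ‖u‖ ≠ 0 := norm_ne_zero_iff.2 hu0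
    field_simp
  rw [hval] at hφ
  have hslope := hasDerivAt_iff_tendsto_slope.1 hφ
  have hslope' : Tendsto (slope (fun t : ℝ => f (y + t • v)) 0) (𝓝[>] 0) (𝓝 (-‖u‖)) :=
    hslope.mono_left (nhdsWithin_mono 0 (fun t ht => ne_of_gt ht))
  have hev : ∀ᶠ t in 𝓝[>] (0:ℝ), -K ≤ slope (fun t : ℝ => f (y + t • v)) 0 t := by
    have hmem : ∀ᶠ t in 𝓝 (0:ℝ), f y - K * ‖(y + t • v) - y‖ ≤ f (y + t • v) := by
      have hcont : Continuous (fun t : ℝ => y + t • v) := by continuity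
      have : Tendsto (fun t : ℝ => y + t • v) (𝓝 0) (𝓝 y) := by
        simpa using hcont.tendsto 0
      exact this.eventually hb
    filter_upwards [nhdsWithin_le_nhds hmem, self_mem_nhdsWithin] with t ht ht0
    have ht0' : (0:ℝ) < t := ht0
    have hn : ‖(y + t • v) - y‖ = t := by
      simp [norm_smul, hvnorm, abs_of_pos ht0']
    rw [hn] at ht
    rw [slope_def_field]
    have : -(K * t) ≤ f (y + t • v) - f y := by linarith
    simp only [zero_smul, add_zero, sub_zero]
    rw [div_eq_inv_mul, ← neg_le_neg_iff] at *
    have h1 : (f y - f (y + t • v)) ≤ K * t := by linarith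
    have h2 : t⁻¹ * (f y - f (y + t • v)) ≤ t⁻¹ * (K * t) :=
      mul_le_mul_of_nonneg_left h1 (inv_nonneg.2 ht0'.le)
    calc -(t⁻¹ * (f (y + t • v) - f y)) = t⁻¹ * (f y - f (y + t • v)) := by ring
      _ ≤ t⁻¹ * (K * t) := h2
      _ = K := by field_simp
      _ = -(-K) := by ring
  have := ge_of_tendsto hslope' hev
  linarith [hlt]



/-- If `g : ℝ^m → ℝ` is continuously differentiable, bounded below
with `g* = inf g` attained on the nonempty closed set `X* = argmin g = {x | g x = g*}`,
and satisfies the PŁ condition `‖∇g(x)‖² ≥ 2μ(g(x) − g*)` with `μ > 0`, then `g`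
satisfies quadratic growth: `g(x) − g* ≥ (μ/2)·dist(x,X*)²`, i.e.
`dist(x,X*) ≤ √(2/μ)·√(g(x) − g*)`. -/
theorem stmt_18 {m : ℕ} (g : EuclideanSpace ℝ (Fin m) → ℝ)
    (hg : ContDiff ℝ 1 g) (hbdd : BddBelow (Set.range g))
    (hattain : {x : EuclideanSpace ℝ (Fin m) | g x = ⨅ y, g y}.Nonempty)
    (hclosed : IsClosed {x : EuclideanSpace ℝ (Fin m) | g x = ⨅ y, g y})
    (μ : ℝ) (hμ : 0 < μ)
    (hPL : ∀ x, 2 * μ * (g x - ⨅ y, g y) ≤ ‖gradient g x‖ ^ 2) :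
    ∀ x : EuclideanSpace ℝ (Fin m),
      μ / 2 * Metric.infDist x {x' | g x' = ⨅ y, g y} ^ 2 ≤ g x - ⨅ y, g y ∧
      Metric.infDist x {x' | g x' = ⨅ y, g y} ≤
        Real.sqrt (2 / μ) * Real.sqrt (g x - ⨅ y, g y) := by
  set c := ⨅ y, g y with hc
  set S := {x' : EuclideanSpace ℝ (Fin m) | g x' = c} with hS
  have hgc : ∀ z, c ≤ g z := fun z => ciInf_le hbdd z
  intro x
  set D := Metric.infDist x S with hD
  have hD0 : 0 ≤ D := Metric.infDist_nonneg
  have hgx : 0 ≤ g x - c := sub_nonneg.2 (hgc x)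
  -- key estimate for each t ∈ (0, μ/2)
  have key : ∀ t : ℝ, 0 < t → t < μ / 2 → t * D ^ 2 ≤ g x - c := by
    intro t ht htμ
    set σ := Real.sqrt t with hσdef
    have hσ : 0 < σ := Real.sqrt_pos.2 ht
    have hσ2 : σ ^ 2 = t := Real.sq_sqrt ht.le
    set F : EuclideanSpace ℝ (Fin m) → ℝ :=
      fun z => Real.sqrt (g z - c) + σ * dist z x with hF
    have hFcont : Continuous F := by
      apply Continuous.add
      · exact Real.continuous_sqrt.comp ((hg.continuous).sub continuous_const)
      · exact continuous_const.mul (continuous_id.dist continuous_const)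
    have hFtend : Filter.Tendsto F (Filter.cocompact _) Filter.atTop := by
      have hmono : ∀ z, σ * ‖z‖ + (-(σ * ‖x‖)) ≤ F z := by
        intro z
        have h1 : ‖z‖ - ‖x‖ ≤ dist z x := by
          rw [dist_eq_norm]; exact norm_sub_norm_le z x
        have h2 : 0 ≤ Real.sqrt (g z - c) := Real.sqrt_nonneg _
        simp only [hF]
        nlinarith [mul_le_mul_of_nonneg_left h1 hσ.le]
      have htend : Filter.Tendsto (fun z : EuclideanSpace ℝ (Fin m) =>
          σ * ‖z‖ + (-(σ * ‖x‖))) (Filter.cocompact _) Filter.atTop := by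
        apply Filter.tendsto_atTop_add_const_right
        exact (tendsto_norm_cocompact_atTop).const_mul_atTop hσ
      exact Filter.tendsto_atTop_mono hmono htend
    obtain ⟨y, hy⟩ := hFcont.exists_forall_le hFtend
    have hyx : ∀ z, Real.sqrt (g y - c) ≤ Real.sqrt (g z - c) + σ * dist z y := by
      intro z
      have h1 := hy z
      have h2 : dist z x ≤ dist z y + dist y x := dist_triangle z y x
      simp only [hF] at h1
      nlinarith [mul_le_mul_of_nonneg_left h2 hσ.le]
    have hyS : y ∈ S := by
      by_contra hne
      have hgy : c < g y := lt_of_le_of_ne (hgc y) (fun h => hne h.symm)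
      have hypos : 0 < g y - c := sub_pos.2 hgy
      set A := Real.sqrt (g y - c) with hA
      have hApos : 0 < A := Real.sqrt_pos.2 hypos
      have hA2 : A ^ 2 = g y - c := Real.sq_sqrt hypos.le
      -- local lower bound for g near y
      have hev : ∀ᶠ z in nhds y, g y - (2 * σ * A) * ‖z - y‖ ≤ g z := by
        filter_upwards [Metric.ball_mem_nhds y (div_pos hApos hσ)] with z hz
        have hd : dist z y < A / σ := Metric.mem_ball.1 hz
        have hd0 : 0 ≤ dist z y := dist_nonneg
        have hAd : 0 ≤ A - σ * dist z y := by
          rw [sub_nonneg]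
          calc σ * dist z y ≤ σ * (A / σ) := by
                exact mul_le_mul_of_nonneg_left hd.le hσ.le
            _ = A := by field_simp
        have hB := hyx z
        have hB0 : 0 ≤ Real.sqrt (g z - c) := Real.sqrt_nonneg _
        have hB2 : Real.sqrt (g z - c) ^ 2 = g z - c :=
          Real.sq_sqrt (sub_nonneg.2 (hgc z))
        have hnd : ‖z - y‖ = dist z y := by rw [dist_eq_norm]
        rw [hnd]
        have h' : A - σ * dist z y ≤ Real.sqrt (g z - c) := by linarith
        nlinarith [mul_self_le_mul_self hAd h', sq_nonneg (σ * dist z y)]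
      have hKnn : 0 ≤ 2 * σ * A := by positivity
      have hdiff : DifferentiableAt ℝ g y :=
        (hg.differentiable one_ne_zero).differentiableAt
      have hgb := aux_grad_bound g y (2 * σ * A) hKnn hdiff hev
      have hPLy := hPL y
      have hsq : ‖gradient g y‖ ^ 2 ≤ (2 * σ * A) ^ 2 := by
        have := norm_nonneg (gradient g y)
        nlinarith
      have hKsq : (2 * σ * A) ^ 2 = 4 * (σ ^ 2 * A ^ 2) := by ring
      rw [hσ2, hA2] at hKsq
      nlinarith [mul_pos (show (0:ℝ) < 2 * μ - 4 * t by linarith) hypos]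
    -- conclude
    have hdist : D ≤ dist x y := Metric.infDist_le_dist_of_mem hyS
    have hFyx : F y ≤ F x := hy x
    have hFx : F x = Real.sqrt (g x - c) := by simp [hF]
    have hFy : σ * dist y x ≤ F y := by
      simp only [hF]
      have := Real.sqrt_nonneg (g y - c)
      linarith
    have hσD : σ * D ≤ Real.sqrt (g x - c) := by
      have h1 : σ * D ≤ σ * dist x y := mul_le_mul_of_nonneg_left hdist hσ.le
      rw [dist_comm x y] at h1
      linarith
    have hsq2 : (σ * D) ^ 2 ≤ Real.sqrt (g x - c) ^ 2 := by
      have h0 : 0 ≤ σ * D := mul_nonneg hσ.le hD0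
      nlinarith [Real.sqrt_nonneg (g x - c)]
    rw [Real.sq_sqrt hgx] at hsq2
    nlinarith
  -- first conclusion
  have first : μ / 2 * D ^ 2 ≤ g x - c := by
    rcases eq_or_lt_of_le hD0 with h0 | hDpos
    · rw [← h0]; simpa using hgx
    · by_contra hcon
      push_neg at hcon
      have hD2 : 0 < D ^ 2 := by positivity
      set t0 := (g x - c) / D ^ 2 with ht0
      have ht0lt : t0 < μ / 2 := by
        rw [ht0, div_lt_iff₀ hD2]; linarith
      have ht0nn : 0 ≤ t0 := div_nonneg hgx hD2.le
      obtain ⟨t, ht1, ht2⟩ := exists_between ht0lt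
      have := key t (lt_of_le_of_lt ht0nn ht1) ht2
      rw [ht0, div_lt_iff₀ hD2] at ht1
      linarith
  refine ⟨first, ?_⟩
  have h2 : D ^ 2 ≤ 2 / μ * (g x - c) := by
    rw [div_mul_eq_mul_div, le_div_iff₀ hμ]
    nlinarith
  calc D = Real.sqrt (D ^ 2) := (Real.sqrt_sq hD0).symm
    _ ≤ Real.sqrt (2 / μ * (g x - c)) := Real.sqrt_le_sqrt h2
    _ = Real.sqrt (2 / μ) * Real.sqrt (g x - c) := Real.sqrt_mul (by positivity) _
end
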